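/- Let f, π, V be Lipschitz continuous with constants L_f, L_π, L_V as above, X compact, X_s ⊆ X, and let X̃ ⊆ X \ X_s be a finite set such that every x ∈ X \ X_s has some x̃ ∈ X̃ with ‖x − x̃‖₁ ≤ τ. Set K = L_V·(L_f·(L_π + 1) + 1). If for every x̃ ∈ X̃ we have E_{ω∼d}[V(f(x̃, π(x̃), ω))] < V(x̃) − τ·K, then there exists ε > 0 such that for every x ∈ X \ X_s, E_{ω∼d}[V(f(x, π(x), ω))] ≤ V(x) − ε. -/

import Mathlib

open MeasureTheory

/-- If the strict discretized expected-decrease condition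
`E[V(f(xt,π(xt),ω))] < V xt - τ·K` with `K = LV·(Lf·(Lπ+1)+1)` holds at every point `xt` of a
finite `τ`-net `Xnet` of `X \ Xs`, then there is `ε > 0` such that
`E[V(f(x,π(x),ω))] ≤ V x - ε` for every `x ∈ X \ Xs`. -/
theorem discretized_check_implies_expected_decrease
    {S U W : Type*} [NormedAddCommGroup S] [NormedAddCommGroup U] [NormedAddCommGroup W]
    [MeasurableSpace W]
    (f : S → U → W → S) (π : S → U) (V : S → ℝ)
    (d : Measure W) [IsProbabilityMeasure d]
    (Xset Xs : Set S) (hXcomp : IsCompact Xset)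
    (Xnet : Finset S) (hXnetsub : (Xnet : Set S) ⊆ Xset \ Xs)
    (Lf Lπ LV τ : ℝ) (hLf : 0 ≤ Lf) (hLπ : 0 ≤ Lπ) (hLV : 0 ≤ LV) (hτ : 0 ≤ τ)
    (hf : ∀ x x' u u' w w', ‖f x u w - f x' u' w'‖ ≤ Lf * (‖x - x'‖ + ‖u - u'‖ + ‖w - w'‖))
    (hπ : ∀ x x', ‖π x - π x'‖ ≤ Lπ * ‖x - x'‖)
    (hV : ∀ x x', |V x - V x'| ≤ LV * ‖x - x'‖)
    (hint : ∀ x : S, Integrable (fun ω => V (f x (π x) ω)) d)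
    (hnet : ∀ x ∈ Xset \ Xs, ∃ xt ∈ Xnet, ‖x - xt‖ ≤ τ)
    (K : ℝ) (hK : K = LV * (Lf * (Lπ + 1) + 1))
    (hcheck : ∀ xt ∈ Xnet, ∫ ω, V (f xt (π xt) ω) ∂d < V xt - τ * K) :
    ∃ ε > 0, ∀ x ∈ Xset \ Xs, ∫ ω, V (f x (π x) ω) ∂d ≤ V x - ε := by
  subst hK
  by_cases hne : Xnet.Nonempty
  · set g : S → ℝ := fun xt => V xt - τ * (LV * (Lf * (Lπ + 1) + 1)) - ∫ ω, V (f xt (π xt) ω) ∂d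
      with hg
    refine ⟨Xnet.inf' hne g, ?_, ?_⟩
    · rw [gt_iff_lt, Finset.lt_inf'_iff]
      intro b hb
      have := hcheck b hb
      simp only [hg]
      linarith
    · intro x hx
      obtain ⟨xt, hxt, hdist⟩ := hnet x hx
      have hε : Xnet.inf' hne g ≤ g xt := Finset.inf'_le g hxt
      have hpt : ∀ ω : W, V (f x (π x) ω) ≤ V (f xt (π xt) ω) + LV * Lf * ((Lπ + 1) * τ) := by
        intro ω
        have h1 := hV (f x (π x) ω) (f xt (π xt) ω)
        have h2 := hf x xt (π x) (π xt) ω ω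
        have h3 := hπ x xt
        have h4 : ‖(ω : W) - ω‖ = 0 := by simp
        have h5 := abs_le.mp h1
        have h6 : ‖f x (π x) ω - f xt (π xt) ω‖ ≤ Lf * ((Lπ + 1) * τ) := by
          rw [h4] at h2
          have h8 : ‖x - xt‖ + ‖π x - π xt‖ + 0 ≤ (Lπ + 1) * τ := by
            nlinarith [mul_le_mul_of_nonneg_left hdist hLπ]
          exact h2.trans (mul_le_mul_of_nonneg_left h8 hLf)
        nlinarith [norm_nonneg (f x (π x) ω - f xt (π xt) ω)]
      have hI : ∫ ω, V (f x (π x) ω) ∂d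
          ≤ ∫ ω, (V (f xt (π xt) ω) + LV * Lf * ((Lπ + 1) * τ)) ∂d :=
        integral_mono (hint x) ((hint xt).add (integrable_const _)) hpt
      rw [integral_add (hint xt) (integrable_const _), integral_const, probReal_univ] at hI
      simp only [ENNReal.toReal_one, smul_eq_mul, one_mul] at hI
      have hVx : V xt ≤ V x + LV * τ := by
        have h1 := (abs_le.mp (hV x xt)).1
        have h2 : LV * ‖x - xt‖ ≤ LV * τ := mul_le_mul_of_nonneg_left hdist hLV
        linarith
      have hlt := hcheck xt hxt
      simp only [hg] at hε
      nlinarith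
  · refine ⟨1, one_pos, fun x hx => ?_⟩
    obtain ⟨xt, hxt, -⟩ := hnet x hx
    exact absurd ⟨xt, hxt⟩ hne
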